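/- The group of units of the ring of integers of the cubic field ℚ(∛2) is exactly {± θ^n : n ∈ ℤ}, where θ = ∛2 - 1; that is, θ is (up to inversion and sign) the fundamental unit of ℚ(∛2). -/

import Mathlib

open IntermediateField Polynomial

noncomputable def cbrtTwo : ℝ := (2 : ℝ) ^ ((1 : ℝ) / 3)
noncomputable def QCbrtTwo : IntermediateField ℚ ℝ := IntermediateField.adjoin ℚ {cbrtTwo}
noncomputable def thetaElt : QCbrtTwo :=
  ⟨cbrtTwo, IntermediateField.mem_adjoin_simple_self ℚ cbrtTwo⟩ - 1

lemma cbrtTwo_pos : 0 < cbrtTwo := Real.rpow_pos_of_pos (by norm_num) _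

lemma cbrtTwo_cube : cbrtTwo ^ 3 = 2 := by
  rw [cbrtTwo, ← Real.rpow_natCast ((2:ℝ) ^ ((1:ℝ)/3)) 3, ← Real.rpow_mul (by norm_num)]
  norm_num

lemma cbrtTwo_gt : 1.25 < cbrtTwo := by
  nlinarith [cbrtTwo_cube, cbrtTwo_pos, sq_nonneg (cbrtTwo - 1.25), sq_nonneg (cbrtTwo + 1.25)]

lemma cbrtTwo_lt : cbrtTwo < 1.26 := by
  nlinarith [cbrtTwo_cube, cbrtTwo_pos, sq_nonneg (cbrtTwo - 1.26), sq_nonneg (cbrtTwo + 1.26)]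

lemma no_rat_cube : ∀ b : ℚ, b ^ 3 ≠ 2 := by
  intro b hb
  have hint : IsIntegral ℤ b := ⟨X ^ 3 - C 2, monic_X_pow_sub_C _ (by norm_num), by
    simp [hb]⟩
  obtain ⟨n, hn⟩ := IsIntegrallyClosed.isIntegral_iff.mp hint
  have hn3 : (n : ℚ) ^ 3 = 2 := by rw [show ((n:ℚ)) = b from hn, hb]
  have : n ^ 3 = 2 := by exact_mod_cast hn3
  have h1 : 1 ≤ n := by nlinarith [sq_nonneg n, sq_nonneg (n+1)]
  have h2 : n ≤ 1 := by nlinarith [sq_nonneg n, sq_nonneg (n-1)]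
  have h3 : n = 1 := le_antisymm h2 h1
  rw [h3] at this
  norm_num at this

lemma X3_irred : Irreducible (X ^ 3 - C (2:ℚ)) :=
  X_pow_sub_C_irreducible_of_prime Nat.prime_three no_rat_cube

lemma cbrtTwo_integral : IsIntegral ℚ cbrtTwo :=
  ⟨X ^ 3 - C 2, monic_X_pow_sub_C _ (by norm_num), by simp [cbrtTwo_cube]⟩

lemma minpoly_cbrtTwo : minpoly ℚ cbrtTwo = X ^ 3 - C 2 :=
  (minpoly.eq_of_irreducible_of_monic X3_irred (by simp [cbrtTwo_cube])
    (monic_X_pow_sub_C _ (by norm_num))).symm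

noncomputable def alphaK : QCbrtTwo := ⟨cbrtTwo, IntermediateField.mem_adjoin_simple_self ℚ cbrtTwo⟩

lemma alphaK_cube : alphaK ^ 3 = 2 := by
  apply Subtype.ext
  push_cast [alphaK]
  exact cbrtTwo_cube

noncomputable def pbQ : PowerBasis ℚ QCbrtTwo := IntermediateField.adjoin.powerBasis cbrtTwo_integral

lemma pbQ_gen : pbQ.gen = alphaK := rfl

lemma pbQ_dim : pbQ.dim = 3 := by
  simp [pbQ, IntermediateField.adjoin.powerBasis, minpoly_cbrtTwo]

noncomputable def basB : Module.Basis (Fin 3) ℚ QCbrtTwo := pbQ.basis.reindex (finCongr pbQ_dim)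

lemma basB_apply (j : Fin 3) : basB j = alphaK ^ (j : ℕ) := by
  rw [basB, Module.Basis.reindex_apply, pbQ.basis_eq_pow, pbQ_gen]
  congr 1

-- combination
noncomputable def comb (a b c : ℚ) : QCbrtTwo := a • 1 + b • alphaK + c • alphaK ^ 2

lemma comb_eq_sum (a b c : ℚ) : comb a b c = ∑ i : Fin 3, ![a,b,c] i • basB i := by
  simp [comb, Fin.sum_univ_three, basB_apply]

lemma repr_comb (a b c : ℚ) (i : Fin 3) : basB.repr (comb a b c) i = ![a,b,c] i := by
  rw [comb_eq_sum, basB.repr_sum_self]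

lemma comb_repr (x : QCbrtTwo) :
    x = comb (basB.repr x 0) (basB.repr x 1) (basB.repr x 2) := by
  conv_lhs => rw [← basB.sum_repr x]
  rw [comb_eq_sum]
  congr 1
  ext i
  fin_cases i <;> simp

lemma comb_mul_alpha (a b c : ℚ) : comb a b c * alphaK = comb (2*c) a b := by
  have h := alphaK_cube
  simp only [comb, Algebra.smul_def, map_mul, map_ofNat]
  linear_combination (algebraMap ℚ QCbrtTwo c) * h

lemma comb_mul_alpha2 (a b c : ℚ) : comb a b c * alphaK ^ 2 = comb (2*b) (2*c) a := by
  rw [pow_two, ← mul_assoc, comb_mul_alpha, comb_mul_alpha]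

lemma leftMulMatrix_comb (a b c : ℚ) :
    Algebra.leftMulMatrix basB (comb a b c) = !![a, 2*c, 2*b; b, a, 2*c; c, b, a] := by
  ext i j
  rw [Algebra.leftMulMatrix_eq_repr_mul, basB_apply]
  fin_cases j <;>
    simp only [Fin.val_zero, Fin.val_one, Fin.val_two, pow_zero, pow_one, mul_one,
      comb_mul_alpha, comb_mul_alpha2, repr_comb] <;>
    fin_cases i <;> simp

lemma norm_comb (a b c : ℚ) :
    Algebra.norm ℚ (comb a b c) = a^3 + 2*b^3 + 4*c^3 - 6*a*b*c := by
  rw [Algebra.norm_eq_matrix_det basB, leftMulMatrix_comb, Matrix.det_fin_three]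
  simp [Matrix.cons_val_zero, Matrix.cons_val_one]
  ring

lemma trace_comb (a b c : ℚ) :
    Algebra.trace ℚ QCbrtTwo (comb a b c) = 3 * a := by
  rw [Algebra.trace_eq_matrix_trace basB, leftMulMatrix_comb, Matrix.trace_fin_three]
  simp
  ring


lemma zmod27 : ∀ x y z : ZMod 27, x^3 + 2*y^3 + 4*z^3 - 6*x*y*z = 0 →
    (ZMod.castHom (by norm_num : (3:ℕ) ∣ 27) (ZMod 3)) x = 0 ∧
    (ZMod.castHom (by norm_num : (3:ℕ) ∣ 27) (ZMod 3)) y = 0 ∧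
    (ZMod.castHom (by norm_num : (3:ℕ) ∣ 27) (ZMod 3)) z = 0 := by decide

lemma intCoords (a b c : ℚ) (hA : ∃ n : ℤ, (n:ℚ) = 3*a) (hB : ∃ n : ℤ, (n:ℚ) = 6*b)
    (hC : ∃ n : ℤ, (n:ℚ) = 6*c)
    (hN : a^3+2*b^3+4*c^3-6*a*b*c = 1 ∨ a^3+2*b^3+4*c^3-6*a*b*c = -1) :
    ∃ a0 b0 c0 : ℤ, (a0:ℚ) = a ∧ (b0:ℚ) = b ∧ (c0:ℚ) = c ∧
      (a0^3+2*b0^3+4*c0^3-6*a0*b0*c0 = 1 ∨ a0^3+2*b0^3+4*c0^3-6*a0*b0*c0 = -1) := by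
  obtain ⟨A, hA⟩ := hA
  obtain ⟨B, hB⟩ := hB
  obtain ⟨C, hC⟩ := hC
  have hE : 4*A^3 + B^3 + 2*C^3 - 6*A*B*C = 108 ∨
      4*A^3 + B^3 + 2*C^3 - 6*A*B*C = -108 := by
    rcases hN with h | h
    · left
      have : ((4*A^3 + B^3 + 2*C^3 - 6*A*B*C : ℤ) : ℚ) = 108 := by
        push_cast
        rw [hA, hB, hC]
        linear_combination 108 * h
      exact_mod_cast this
    · right
      have : ((4*A^3 + B^3 + 2*C^3 - 6*A*B*C : ℤ) : ℚ) = -108 := by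
        push_cast
        rw [hA, hB, hC]
        linear_combination 108 * h
      exact_mod_cast this
  -- B is even
  have hBeven : Even B := by
    have : Even (B^3) := by
      rcases hE with h | h
      · exact ⟨54 - 2*A^3 - C^3 + 3*A*B*C, by linarith⟩
      · exact ⟨-54 - 2*A^3 - C^3 + 3*A*B*C, by linarith⟩
    exact (Int.even_pow.mp this).1
  obtain ⟨B1, hB1⟩ := hBeven
  have hCeven : Even C := by
    have : Even (C^3) := by
      rcases hE with h | h
      · refine ⟨27 - A^3 - 2*B1^3 + 3*A*B1*C, ?_⟩
        apply mul_left_cancel₀ (two_ne_zero (α := ℤ))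
        rw [hB1] at h
        linear_combination h
      · refine ⟨-27 - A^3 - 2*B1^3 + 3*A*B1*C, ?_⟩
        apply mul_left_cancel₀ (two_ne_zero (α := ℤ))
        rw [hB1] at h
        linear_combination h
    exact (Int.even_pow.mp this).1
  obtain ⟨C1, hC1⟩ := hCeven
  have hE2 : A^3 + 2*B1^3 + 4*C1^3 - 6*A*B1*C1 = 27 ∨
      A^3 + 2*B1^3 + 4*C1^3 - 6*A*B1*C1 = -27 := by
    rw [hB1, hC1] at hE
    rcases hE with h | h
    · left
      apply mul_left_cancel₀ (four_ne_zero (α := ℤ))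
      linear_combination h
    · right
      apply mul_left_cancel₀ (four_ne_zero (α := ℤ))
      linear_combination h
  have h27 : ((A : ZMod 27))^3 + 2*(B1 : ZMod 27)^3 + 4*(C1 : ZMod 27)^3
      - 6*(A : ZMod 27)*(B1 : ZMod 27)*(C1 : ZMod 27) = 0 := by
    rcases hE2 with h | h
    · calc ((A : ZMod 27))^3 + 2*(B1 : ZMod 27)^3 + 4*(C1 : ZMod 27)^3
          - 6*(A : ZMod 27)*(B1 : ZMod 27)*(C1 : ZMod 27)
        = ((A^3 + 2*B1^3 + 4*C1^3 - 6*A*B1*C1 : ℤ) : ZMod 27) := by push_cast; ring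
      _ = ((27 : ℤ) : ZMod 27) := by rw [h]
      _ = 0 := by decide
    · calc ((A : ZMod 27))^3 + 2*(B1 : ZMod 27)^3 + 4*(C1 : ZMod 27)^3
          - 6*(A : ZMod 27)*(B1 : ZMod 27)*(C1 : ZMod 27)
        = ((A^3 + 2*B1^3 + 4*C1^3 - 6*A*B1*C1 : ℤ) : ZMod 27) := by push_cast; ring
      _ = ((-27 : ℤ) : ZMod 27) := by rw [h]
      _ = 0 := by decide
  obtain ⟨hx0, hy0, hz0⟩ := zmod27 _ _ _ h27
  have hdvd : (3 : ℤ) ∣ A ∧ (3 : ℤ) ∣ B1 ∧ (3 : ℤ) ∣ C1 := by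
    refine ⟨?_, ?_, ?_⟩
    · have := (ZMod.intCast_zmod_eq_zero_iff_dvd A 3).mp
        (by rw [← map_intCast (ZMod.castHom (by norm_num : (3:ℕ) ∣ 27) (ZMod 3)) A]; exact hx0)
      exact_mod_cast this
    · have := (ZMod.intCast_zmod_eq_zero_iff_dvd B1 3).mp
        (by rw [← map_intCast (ZMod.castHom (by norm_num : (3:ℕ) ∣ 27) (ZMod 3)) B1]; exact hy0)
      exact_mod_cast this
    · have := (ZMod.intCast_zmod_eq_zero_iff_dvd C1 3).mp
        (by rw [← map_intCast (ZMod.castHom (by norm_num : (3:ℕ) ∣ 27) (ZMod 3)) C1]; exact hz0)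
      exact_mod_cast this
  obtain ⟨⟨a0, ha0⟩, ⟨b0, hb0⟩, ⟨c0, hc0⟩⟩ := hdvd
  refine ⟨a0, b0, c0, ?_, ?_, ?_, ?_⟩
  · have : (3 : ℚ) * a0 = 3 * a := by
      rw [← hA, ha0]; push_cast; ring
    linarith
  · have : (6 : ℚ) * b0 = 6 * b := by
      rw [← hB, hB1, hb0]; push_cast; ring
    linarith
  · have : (6 : ℚ) * c0 = 6 * c := by
      rw [← hC, hC1, hc0]; push_cast; ring
    linarith
  · rw [ha0, hb0, hc0] at hE2
    rcases hE2 with h | h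
    · left
      apply mul_left_cancel₀ (by norm_num : (27:ℤ) ≠ 0)
      linear_combination h
    · right
      apply mul_left_cancel₀ (by norm_num : (27:ℤ) ≠ 0)
      linear_combination h


lemma sqBound {y b : ℝ} (hb : 0 ≤ b) (h : y^2 < b^2) : -b < y ∧ y < b := by
  constructor <;> nlinarith [sq_nonneg (y - b), sq_nonneg (y + b)]

lemma numStep {x Q : ℝ} (h1 : 1 < x) (hQ0 : 0 ≤ Q) (hQx : x * Q = 1)
    (hx2 : x^2 ≤ 3.8476) : x ≤ 1.962 ∧ Q < 1 := by
  constructor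
  · nlinarith [sq_nonneg (x - 1.962)]
  · nlinarith

lemma keyArith (a b c : ℚ) (hA : ∃ n : ℤ, (n:ℚ) = 3*a) (hB : ∃ n : ℤ, (n:ℚ) = 6*b)
    (hC : ∃ n : ℤ, (n:ℚ) = 6*c)
    (hN : a^3+2*b^3+4*c^3-6*a*b*c = 1 ∨ a^3+2*b^3+4*c^3-6*a*b*c = -1)
    (h1 : 1 < (a:ℝ) + (b:ℝ) * cbrtTwo + (c:ℝ) * cbrtTwo^2)
    (h2 : ((a:ℝ) + (b:ℝ) * cbrtTwo + (c:ℝ) * cbrtTwo^2)^2 ≤ 1 + cbrtTwo + cbrtTwo^2) :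
    False := by
  obtain ⟨a0, b0, c0, ha, hb, hc, hN0⟩ := intCoords a b c hA hB hC hN
  have hcube : cbrtTwo^3 = 2 := cbrtTwo_cube
  have hgt : 1.25 < cbrtTwo := cbrtTwo_gt
  have hlt : cbrtTwo < 1.26 := cbrtTwo_lt
  have hapos : (0:ℝ) < cbrtTwo := by linarith
  have hasq : (1.5625:ℝ) < cbrtTwo^2 := by nlinarith [sq_nonneg (cbrtTwo - 1.25)]
  have hasq' : cbrtTwo^2 < 1.5876 := by nlinarith [sq_nonneg (cbrtTwo - 1.26)]
  have hra : ((a:ℝ)) = (a0:ℝ) := by rw [← ha]; push_cast; ring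
  have hrb : ((b:ℝ)) = (b0:ℝ) := by rw [← hb]; push_cast; ring
  have hrc : ((c:ℝ)) = (c0:ℝ) := by rw [← hc]; push_cast; ring
  rw [hra, hrb, hrc] at h1 h2
  set α : ℝ := cbrtTwo with halpha
  clear_value α
  set x : ℝ := (a0:ℝ) + (b0:ℝ) * α + (c0:ℝ) * α^2 with hx
  set Q : ℝ := ((a0:ℝ) - ((b0:ℝ)*α + (c0:ℝ)*α^2)/2)^2 + 3/4*((b0:ℝ)*α - (c0:ℝ)*α^2)^2 with hQ
  clear_value x Q
  have hQ0 : 0 ≤ Q := by rw [hQ]; positivity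
  have hxQ : x * Q = (a0:ℝ)^3 + 2*(b0:ℝ)^3 + 4*(c0:ℝ)^3 - 6*(a0:ℝ)*(b0:ℝ)*(c0:ℝ) := by
    rw [hx, hQ]
    linear_combination ((b0:ℝ)^3 + 2*(c0:ℝ)^3 + (c0:ℝ)^3*α^3 - 3*(a0:ℝ)*(b0:ℝ)*(c0:ℝ)) * hcube
  have hNR : x * Q = 1 ∨ x * Q = -1 := by
    rcases hN0 with h | h
    · left; rw [hxQ]; exact_mod_cast congrArg (Int.cast : ℤ → ℝ) h
    · right; rw [hxQ]; exact_mod_cast congrArg (Int.cast : ℤ → ℝ) h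
  have hQx : x * Q = 1 := by
    rcases hNR with h | h
    · exact h
    · have := mul_nonneg (le_of_lt (lt_trans one_pos h1)) hQ0
      linarith
  have hx2 : x^2 ≤ 3.8476 := by linarith
  obtain ⟨hxle, hQlt⟩ := numStep h1 hQ0 hQx hx2
  have e1 : (3*(a0:ℝ) - x)^2 + 3*((b0:ℝ)*α - (c0:ℝ)*α^2)^2 = 4*Q := by
    rw [hx, hQ]; ring
  have h3a : (3*(a0:ℝ) - x)^2 < 4 := by
    linarith [sq_nonneg ((b0:ℝ)*α - (c0:ℝ)*α^2)]
  obtain ⟨h3al, h3au⟩ := sqBound (by norm_num : (0:ℝ) ≤ 2) (by linarith : (3*(a0:ℝ) - x)^2 < 2^2)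
  have ha1 : a0 = 0 ∨ a0 = 1 := by
    have hu' : 3*a0 < 4 := by exact_mod_cast (show (3*(a0:ℝ)) < 4 by linarith)
    have hl' : -1 < 3*a0 := by exact_mod_cast (show (-1:ℝ) < 3*(a0:ℝ) by linarith)
    omega
  have hd2 : ((b0:ℝ)*α - (c0:ℝ)*α^2)^2 < 1.16^2 := by
    have : 3*((b0:ℝ)*α - (c0:ℝ)*α^2)^2 < 4 * 1 := by
      linarith [sq_nonneg (3*(a0:ℝ) - x)]
    nlinarith
  obtain ⟨hdl, hdu⟩ := sqBound (by norm_num : (0:ℝ) ≤ 1.16) hd2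
  rcases ha1 with h | h
  · subst h
    rcases hN0 with hh | hh <;>
    · have h2 : 2*(b0^3 + 2*c0^3) = 1 ∨ 2*(b0^3 + 2*c0^3) = -1 := by
        first
          | (left; linarith)
          | (right; linarith)
      generalize b0^3 + 2*c0^3 = m at h2
      omega
  · subst h
    have hb0 : b0 = 0 := by
      by_contra hb0
      have : b0 ≤ -1 ∨ 1 ≤ b0 := by omega
      rcases this with hs | hs
      · have hbr : (b0:ℝ) ≤ -1 := by exact_mod_cast hs
        have hba : (b0:ℝ)*α ≤ -1*α :=
          mul_le_mul_of_nonneg_right hbr (le_of_lt hapos)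
        have hsum : 2*((b0:ℝ)*α) = (x - 1) + ((b0:ℝ)*α - (c0:ℝ)*α^2) := by
          rw [hx]; push_cast; ring
        linarith
      · have hbr : (1:ℝ) ≤ (b0:ℝ) := by exact_mod_cast hs
        have hba : 1*α ≤ (b0:ℝ)*α :=
          mul_le_mul_of_nonneg_right hbr (le_of_lt hapos)
        have hsum : 2*((b0:ℝ)*α) = (x - 1) + ((b0:ℝ)*α - (c0:ℝ)*α^2) := by
          rw [hx]; push_cast; ring
        linarith
    subst hb0
    have hc0 : c0 = 0 := by
      by_contra hc0
      have : c0 ≤ -1 ∨ 1 ≤ c0 := by omega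
      rcases this with hs | hs
      · have hcr : (c0:ℝ) ≤ -1 := by exact_mod_cast hs
        have hca : (c0:ℝ)*α^2 ≤ -1*α^2 :=
          mul_le_mul_of_nonneg_right hcr (sq_nonneg α)
        have hsum : (c0:ℝ)*α^2 = x - 1 := by rw [hx]; push_cast; ring
        linarith
      · have hcr : (1:ℝ) ≤ (c0:ℝ) := by exact_mod_cast hs
        have hca : 1*α^2 ≤ (c0:ℝ)*α^2 :=
          mul_le_mul_of_nonneg_right hcr (sq_nonneg α)
        have hsum : (c0:ℝ)*α^2 = x - 1 := by rw [hx]; push_cast; ring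
        linarith
    subst hc0
    rw [hx] at h1
    norm_num at h1



instance fdQ : FiniteDimensional ℚ QCbrtTwo :=
  IntermediateField.adjoin.finiteDimensional cbrtTwo_integral

instance nfQ : NumberField QCbrtTwo where

lemma alphaK_int : IsIntegral ℤ alphaK :=
  ⟨X ^ 3 - C 2, monic_X_pow_sub_C _ (by norm_num), by simp [alphaK_cube]⟩

lemma coe_comb (a b c : ℚ) : ((comb a b c : QCbrtTwo) : ℝ) = a + b * cbrtTwo + c * cbrtTwo^2 := by
  have hv : ((alphaK : QCbrtTwo) : ℝ) = cbrtTwo := rfl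
  rw [comb]
  push_cast [Rat.smul_def, hv]
  ring

lemma exists_int_trace (y : QCbrtTwo) (hy : IsIntegral ℤ y) :
    ∃ n : ℤ, (n : ℚ) = Algebra.trace ℚ QCbrtTwo y := by
  obtain ⟨n, hn⟩ := IsIntegrallyClosed.isIntegral_iff.mp
    (Algebra.isIntegral_trace (R := ℤ) (L := ℚ) (F := QCbrtTwo) hy)
  exact ⟨n, hn⟩

lemma unit_big (u : (NumberField.RingOfIntegers QCbrtTwo)ˣ)
    (h1 : 1 < (((u : NumberField.RingOfIntegers QCbrtTwo) : QCbrtTwo) : ℝ)) :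
    1 + cbrtTwo + cbrtTwo^2 < ((((u : NumberField.RingOfIntegers QCbrtTwo) : QCbrtTwo) : ℝ))^2 := by
  set y : QCbrtTwo := ((u : NumberField.RingOfIntegers QCbrtTwo) : QCbrtTwo) with hy
  have hyint : IsIntegral ℤ y := NumberField.RingOfIntegers.isIntegral_coe _
  set a : ℚ := basB.repr y 0
  set b : ℚ := basB.repr y 1
  set c : ℚ := basB.repr y 2
  have hcomb : y = comb a b c := comb_repr y
  -- traces
  have hA : ∃ n : ℤ, (n:ℚ) = 3*a := by
    obtain ⟨n, hn⟩ := exists_int_trace y hyint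
    exact ⟨n, by rw [hn, hcomb, trace_comb]⟩
  have hC : ∃ n : ℤ, (n:ℚ) = 6*c := by
    obtain ⟨n, hn⟩ := exists_int_trace (y * alphaK) (hyint.mul alphaK_int)
    refine ⟨n, by rw [hn, hcomb, comb_mul_alpha, trace_comb]; ring⟩
  have hB : ∃ n : ℤ, (n:ℚ) = 6*b := by
    obtain ⟨n, hn⟩ := exists_int_trace (y * alphaK^2) (hyint.mul (alphaK_int.pow 2))
    refine ⟨n, by rw [hn, hcomb, comb_mul_alpha2, trace_comb]; ring⟩
  -- norm
  have hNu : |Algebra.norm ℚ y| = 1 := by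
    have h := NumberField.isUnit_iff_norm.mp u.isUnit
    rwa [RingOfIntegers.coe_norm] at h
  have hN : a^3+2*b^3+4*c^3-6*a*b*c = 1 ∨ a^3+2*b^3+4*c^3-6*a*b*c = -1 := by
    have := abs_eq (le_of_lt one_pos) |>.mp hNu
    rcases this with h | h
    · left; rw [← norm_comb a b c, ← hcomb]; exact h
    · right; rw [← norm_comb a b c, ← hcomb]; exact h
  -- value
  have hval : (y : ℝ) = (a:ℝ) + (b:ℝ) * cbrtTwo + (c:ℝ) * cbrtTwo^2 := by
    rw [hcomb]; exact coe_comb a b c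
  rw [hval] at h1 ⊢
  by_contra hcon
  push_neg at hcon
  exact keyArith a b c hA hB hC hN h1 hcon

-- theta and its inverse
noncomputable def invTheta : QCbrtTwo := 1 + alphaK + alphaK^2

lemma theta_eq : thetaElt = alphaK - 1 := rfl

lemma theta_mul_invTheta : thetaElt * invTheta = 1 := by
  rw [theta_eq, invTheta]
  linear_combination alphaK_cube

lemma theta_int : IsIntegral ℤ thetaElt := by
  rw [theta_eq]; exact alphaK_int.sub isIntegral_one

lemma invTheta_int : IsIntegral ℤ invTheta :=
  (isIntegral_one.add alphaK_int).add (alphaK_int.pow 2)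

lemma coe_theta : ((thetaElt : QCbrtTwo) : ℝ) = cbrtTwo - 1 := by
  rw [theta_eq]
  push_cast
  rfl

lemma coe_invTheta : ((invTheta : QCbrtTwo) : ℝ) = 1 + cbrtTwo + cbrtTwo^2 := by
  rw [invTheta]
  push_cast
  rfl

noncomputable def uTheta : (NumberField.RingOfIntegers QCbrtTwo)ˣ where
  val := ⟨thetaElt, theta_int⟩
  inv := ⟨invTheta, invTheta_int⟩
  val_inv := by
    apply NumberField.RingOfIntegers.ext
    push_cast
    exact theta_mul_invTheta
  inv_val := by
    apply NumberField.RingOfIntegers.ext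
    push_cast
    exact (mul_comm invTheta thetaElt).trans theta_mul_invTheta

-- the real value of a unit
noncomputable def vR (u : (NumberField.RingOfIntegers QCbrtTwo)ˣ) : ℝ :=
  (((u : NumberField.RingOfIntegers QCbrtTwo) : QCbrtTwo) : ℝ)

lemma vR_mul (u v : (NumberField.RingOfIntegers QCbrtTwo)ˣ) : vR (u*v) = vR u * vR v := by
  rw [vR, vR, vR, Units.val_mul]
  push_cast
  rfl

lemma vR_one : vR 1 = 1 := by simp [vR]

lemma vR_mul_inv (u : (NumberField.RingOfIntegers QCbrtTwo)ˣ) : vR u * vR u⁻¹ = 1 := by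
  rw [← vR_mul, mul_inv_cancel, vR_one]

lemma vR_ne_zero (u : (NumberField.RingOfIntegers QCbrtTwo)ˣ) : vR u ≠ 0 :=
  left_ne_zero_of_mul_eq_one (vR_mul_inv u)

lemma vR_neg (u : (NumberField.RingOfIntegers QCbrtTwo)ˣ) : vR (-u) = -(vR u) := by
  rw [vR, vR, Units.val_neg]
  push_cast
  rfl

lemma vR_uTheta_inv : vR uTheta⁻¹ = 1 + cbrtTwo + cbrtTwo^2 := by
  have h := vR_mul_inv uTheta
  have h1 : vR uTheta = cbrtTwo - 1 := coe_theta
  have h2 : (cbrtTwo - 1) * (1 + cbrtTwo + cbrtTwo^2) = 1 := by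
    linear_combination cbrtTwo_cube
  have h3 : cbrtTwo - 1 ≠ 0 := by
    have := cbrtTwo_gt
    intro hcon
    rw [show cbrtTwo = 1 by linarith] at this
    norm_num at this
  apply mul_left_cancel₀ h3
  rw [← h1, h, ← h1] at *
  rw [h1, h2]

lemma unit_vR_big (u : (NumberField.RingOfIntegers QCbrtTwo)ˣ) (h1 : 1 < vR u) :
    1 + cbrtTwo + cbrtTwo^2 < (vR u)^2 := unit_big u h1

lemma unit_abs_big (u : (NumberField.RingOfIntegers QCbrtTwo)ˣ) (h : 1 < |vR u|) :
    1 + cbrtTwo + cbrtTwo^2 < (vR u)^2 := by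
  rcases le_or_gt 0 (vR u) with hs | hs
  · rw [abs_of_nonneg hs] at h
    exact unit_vR_big u h
  · rw [abs_of_neg hs] at h
    have h' : 1 < vR (-u) := by rw [vR_neg u]; exact h
    have h2 := unit_vR_big (-u) h'
    have h3 : (vR (-u))^2 = (vR u)^2 := by rw [vR_neg u]; ring
    rw [← h3]
    exact h2

/-- The subgroup of `ℝ` of logarithms of absolute values of units. -/
noncomputable def logUnits : AddSubgroup ℝ where
  carrier := {s | ∃ u : (NumberField.RingOfIntegers QCbrtTwo)ˣ, Real.exp s = |vR u|}
  zero_mem' := ⟨1, by rw [Real.exp_zero, vR_one]; norm_num⟩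
  add_mem' := by
    rintro s t ⟨u, hu⟩ ⟨v, hv⟩
    exact ⟨u * v, by rw [Real.exp_add, hu, hv, vR_mul, abs_mul]⟩
  neg_mem' := by
    rintro s ⟨u, hu⟩
    refine ⟨u⁻¹, ?_⟩
    have hinv : |vR u| * |vR u⁻¹| = 1 := by rw [← abs_mul, vR_mul_inv]; norm_num
    rw [Real.exp_neg, hu, ← inv_eq_of_mul_eq_one_right hinv]

lemma one_add_pos : (0:ℝ) < 1 + cbrtTwo + cbrtTwo^2 := by
  have := cbrtTwo_pos
  nlinarith [sq_nonneg cbrtTwo]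

lemma L_mem : Real.log (1 + cbrtTwo + cbrtTwo^2) ∈ logUnits := by
  refine ⟨uTheta⁻¹, ?_⟩
  rw [Real.exp_log one_add_pos, vR_uTheta_inv, abs_of_pos one_add_pos]

lemma L_big : Real.log 2 ≤ Real.log (1 + cbrtTwo + cbrtTwo^2) := by
  apply Real.log_le_log (by norm_num)
  nlinarith [cbrtTwo_gt, sq_nonneg cbrtTwo]

lemma L_pos : 0 < Real.log (1 + cbrtTwo + cbrtTwo^2) := by
  have := Real.log_two_gt_d9
  linarith [L_big]

lemma pos_mem_large {s : ℝ} (hs : s ∈ logUnits) (h : 0 < s) :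
    Real.log (1 + cbrtTwo + cbrtTwo^2) < 2 * s := by
  obtain ⟨u, hu⟩ := hs
  have h1 : 1 < |vR u| := by
    rw [← hu, show (1:ℝ) = Real.exp 0 from (Real.exp_zero).symm]
    exact Real.exp_lt_exp.mpr h
  have h2 := unit_abs_big u h1
  have h3 : (vR u)^2 = Real.exp (2 * s) := by
    rw [show Real.exp (2*s) = Real.exp s * Real.exp s by rw [← Real.exp_add]; ring_nf, hu,
      ← abs_mul, ← pow_two, abs_of_nonneg (sq_nonneg _)]
  have h4 : 1 + cbrtTwo + cbrtTwo^2 < Real.exp (2 * s) := by rw [← h3]; exact h2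
  calc Real.log (1 + cbrtTwo + cbrtTwo^2) < Real.log (Real.exp (2*s)) :=
        Real.log_lt_log one_add_pos h4
    _ = 2 * s := Real.log_exp _

lemma logUnits_eq : ∀ s ∈ logUnits, ∃ n : ℤ, s = n * Real.log (1 + cbrtTwo + cbrtTwo^2) := by
  rcases AddSubgroup.dense_or_cyclic logUnits with hd | ⟨g, hg⟩
  · exfalso
    obtain ⟨s, hsS, hs1, hs2⟩ := hd.exists_between (by norm_num : (0.1:ℝ) < 0.2)
    have := pos_mem_large hsS (by linarith)
    have := Real.log_two_gt_d9
    have := L_big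
    linarith
  · intro s hs
    have hmem : ∀ t : ℝ, t ∈ logUnits ↔ ∃ n : ℤ, n • g = t := by
      intro t
      rw [hg]
      exact AddSubgroup.mem_closure_singleton
    obtain ⟨m, hm⟩ := (hmem _).mp L_mem
    have hLpos := L_pos
    have hgne : g ≠ 0 := by
      intro h0
      rw [h0, smul_zero] at hm
      rw [← hm] at hLpos
      norm_num at hLpos
    have hgabs : |g| ∈ logUnits := by
      rcases abs_cases g with ⟨h1, _⟩ | ⟨h1, _⟩
      · rw [h1]
        exact (hmem g).mpr ⟨1, one_smul _ _⟩
      · rw [h1]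
        exact (hmem (-g)).mpr ⟨-1, by simp⟩
    have hgpos : 0 < |g| := abs_pos.mpr hgne
    have hbig := pos_mem_large hgabs hgpos
    have hmabs : |(m:ℝ)| * |g| = Real.log (1 + cbrtTwo + cbrtTwo^2) := by
      rw [← abs_mul]
      rw [show (m:ℝ) * g = Real.log (1 + cbrtTwo + cbrtTwo^2) by
        rw [← hm, zsmul_eq_mul]]
      exact abs_of_pos hLpos
    have hm2 : (|(m:ℝ)|) < 2 := by
      by_contra hc
      push_neg at hc
      nlinarith
    have hmne : m ≠ 0 := by
      intro h0
      rw [h0] at hm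
      simp only [zero_smul] at hm
      rw [← hm] at hLpos
      norm_num at hLpos
    have hm1 : m = 1 ∨ m = -1 := by
      have : |(m:ℝ)| = ((|m| : ℤ) : ℝ) := by push_cast; ring
      rw [this] at hm2
      have h2' : |m| < 2 := by exact_mod_cast hm2
      rcases abs_cases m with ⟨he, _⟩ | ⟨he, _⟩ <;> omega
    have hgL : |g| = Real.log (1 + cbrtTwo + cbrtTwo^2) := by
      rcases hm1 with h | h <;> rw [h] at hmabs <;>
        simpa using hmabs
    obtain ⟨n, hn⟩ := (hmem s).mp hs
    rcases abs_cases g with ⟨h1, _⟩ | ⟨h1, _⟩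
    · refine ⟨n, ?_⟩
      rw [← hn, zsmul_eq_mul, ← hgL, h1]
    · refine ⟨-n, ?_⟩
      rw [← hn, zsmul_eq_mul, ← hgL, h1]
      push_cast
      ring

lemma coe_zpow_theta (n : ℤ) : ((thetaElt ^ n : QCbrtTwo) : ℝ) = (cbrtTwo - 1) ^ n := by
  have h := map_zpow₀ (algebraMap QCbrtTwo ℝ) thetaElt n
  have h2 : algebraMap QCbrtTwo ℝ thetaElt = cbrtTwo - 1 := coe_theta
  rw [h2] at h
  rw [← h]
  rfl

lemma theta_val_inv : cbrtTwo - 1 = (1 + cbrtTwo + cbrtTwo^2)⁻¹ := by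
  apply eq_inv_of_mul_eq_one_left
  linear_combination cbrtTwo_cube

lemma units_coe_zpow (m : ℤ) :
    (((uTheta ^ m : (NumberField.RingOfIntegers QCbrtTwo)ˣ) :
      NumberField.RingOfIntegers QCbrtTwo) : QCbrtTwo) = thetaElt ^ m := by
  set f : NumberField.RingOfIntegers QCbrtTwo →* QCbrtTwo :=
    (algebraMap (NumberField.RingOfIntegers QCbrtTwo) QCbrtTwo).toMonoidHom with hf
  have h1 : (((uTheta ^ m : (NumberField.RingOfIntegers QCbrtTwo)ˣ) :
      NumberField.RingOfIntegers QCbrtTwo) : QCbrtTwo)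
      = ((Units.map f (uTheta ^ m) : QCbrtTwoˣ) : QCbrtTwo) := rfl
  rw [h1, map_zpow, Units.val_zpow_eq_zpow_val]
  congr 1

theorem units_of_QCbrtTwo :
    {x : QCbrtTwo | ∃ u : (NumberField.RingOfIntegers QCbrtTwo)ˣ,
        ((u : NumberField.RingOfIntegers QCbrtTwo) : QCbrtTwo) = x}
      = {x : QCbrtTwo | ∃ n : ℤ, x = thetaElt ^ n ∨ x = -thetaElt ^ n} := by
  ext x
  simp only [Set.mem_setOf_eq]
  constructor
  · rintro ⟨u, hux⟩
    have hxv : (x : ℝ) = vR u := by rw [← hux]; rfl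
    have habspos : 0 < |vR u| := abs_pos.mpr (vR_ne_zero u)
    have hS : Real.log |vR u| ∈ logUnits := ⟨u, Real.exp_log habspos⟩
    obtain ⟨n, hn⟩ := logUnits_eq _ hS
    have hzpos : (0:ℝ) < (1 + cbrtTwo + cbrtTwo^2) ^ n := zpow_pos one_add_pos n
    have habs : |vR u| = (1 + cbrtTwo + cbrtTwo^2) ^ n := by
      calc |vR u| = Real.exp (Real.log |vR u|) := (Real.exp_log habspos).symm
        _ = Real.exp (Real.log ((1 + cbrtTwo + cbrtTwo^2) ^ n)) := by
            rw [hn, Real.log_zpow]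
        _ = (1 + cbrtTwo + cbrtTwo^2) ^ n := Real.exp_log hzpos
    have hkey : ((thetaElt ^ (-n) : QCbrtTwo) : ℝ) = (1 + cbrtTwo + cbrtTwo^2) ^ n := by
      rw [coe_zpow_theta, theta_val_inv, inv_zpow, ← zpow_neg, neg_neg]
    refine ⟨-n, ?_⟩
    rcases abs_cases (vR u) with ⟨he, _⟩ | ⟨he, _⟩
    · left
      apply Subtype.coe_injective
      show (x:ℝ) = ((thetaElt ^ (-n) : QCbrtTwo) : ℝ)
      rw [hxv, ← he, habs, ← hkey]
    · right
      apply Subtype.coe_injective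
      show (x:ℝ) = ((-thetaElt ^ (-n) : QCbrtTwo) : ℝ)
      have h5 : (x:ℝ) = -((1 + cbrtTwo + cbrtTwo^2) ^ n) := by
        rw [hxv]
        linarith [habs, he]
      rw [h5, ← hkey]
      push_cast
      ring
  · rintro ⟨n, h | h⟩
    · exact ⟨uTheta ^ n, by rw [units_coe_zpow, h]⟩
    · refine ⟨-(uTheta ^ n), ?_⟩
      have h2 : (((-(uTheta ^ n) : (NumberField.RingOfIntegers QCbrtTwo)ˣ) :
          NumberField.RingOfIntegers QCbrtTwo) : QCbrtTwo)
          = -(((uTheta ^ n : (NumberField.RingOfIntegers QCbrtTwo)ˣ) :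
          NumberField.RingOfIntegers QCbrtTwo) : QCbrtTwo) := by
        rw [Units.val_neg]
        push_cast
        rfl
      rw [h2, units_coe_zpow, h]
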